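/- Let ℓ ≥ 1 be odd-case data: let z = ((2ℓ+1) + i√(4ℓ+3))/(2(ℓ+1)) ∈ ℂ and let w be a square root of z. Then the field ℚ(w) is a degree-2 extension of ℚ(w + w^{-1}); in particular ℚ(w) ≠ ℚ(w + w^{-1}). -/

import Mathlib

open Polynomial IntermediateField

/-- The reals as an intermediate field of `ℚ ⊆ ℂ`. -/
noncomputable def realIF : IntermediateField ℚ ℂ :=
  Subfield.toIntermediateField Complex.ofRealHom.fieldRange (fun q => ⟨(q : ℝ), by simp⟩)

lemma mem_realIF_iff {x : ℂ} : x ∈ realIF ↔ x.im = 0 := by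
  constructor
  · rintro ⟨r, rfl⟩; simp
  · intro h; exact ⟨x.re, Complex.ext (by simp) (by simp [h])⟩

set_option maxHeartbeats 1000000 in
set_option synthInstance.maxHeartbeats 400000 in
/-- For `ℓ ≥ 1`, let `z = ((2ℓ+1) + i√(4ℓ+3))/(2(ℓ+1)) ∈ ℂ` and let `w` be a square
root of `z`. Then `ℚ(w)` is a degree-2 extension of `ℚ(w + w⁻¹)`;
in particular `ℚ(w) ≠ ℚ(w + w⁻¹)`. -/
theorem stmt_11 (ℓ : ℕ) (hℓ : 1 ≤ ℓ) (z w : ℂ)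
    (hz : z = ((2 * (ℓ : ℂ) + 1) + Complex.I * Real.sqrt (4 * (ℓ : ℝ) + 3)) /
      (2 * ((ℓ : ℂ) + 1)))
    (hw : w ^ 2 = z) :
    (∃ hle : IntermediateField.adjoin ℚ {w + w⁻¹} ≤ IntermediateField.adjoin ℚ {w},
      Module.finrank (IntermediateField.adjoin ℚ {w + w⁻¹})
        (IntermediateField.extendScalars hle) = 2) ∧
    IntermediateField.adjoin ℚ {w} ≠ IntermediateField.adjoin ℚ {w + w⁻¹} := by
  set r : ℝ := Real.sqrt (4 * (ℓ : ℝ) + 3) with hr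
  have hrpos : 0 < r := Real.sqrt_pos.mpr (by positivity)
  have hr2 : r ^ 2 = 4 * (ℓ : ℝ) + 3 := Real.sq_sqrt (by positivity)
  have hd : (2 : ℂ) * ((ℓ : ℂ) + 1) ≠ 0 := by
    have h1 : ((ℓ : ℂ) + 1) ≠ 0 := by
      intro h
      have h2 := congrArg Complex.re h
      simp only [Complex.add_re, Complex.natCast_re, Complex.one_re, Complex.zero_re] at h2
      nlinarith [Nat.cast_nonneg (α := ℝ) ℓ]
    simp [h1]
  have hdre : (2 : ℝ) * ((ℓ : ℝ) + 1) ≠ 0 := by positivity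
  -- imaginary part of z is nonzero
  have hzim : z.im = r / (2 * ((ℓ : ℝ) + 1)) := by
    rw [hz]
    rw [Complex.div_im]
    simp [Complex.normSq, Complex.mul_im, Complex.mul_re]
    field_simp
  have hzim' : z.im ≠ 0 := by
    rw [hzim]; positivity
  -- |z| = 1
  have hnz : Complex.normSq z = 1 := by
    rw [hz, Complex.normSq_div]
    have h1 : Complex.normSq ((2 * (ℓ : ℂ) + 1) + Complex.I * r) =
        (2 * (ℓ : ℝ) + 1) ^ 2 + r ^ 2 := by
      simp [Complex.normSq_apply, Complex.add_re, Complex.add_im, Complex.mul_re,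
        Complex.mul_im]
      ring
    have h2 : Complex.normSq (2 * ((ℓ : ℂ) + 1)) = (2 * ((ℓ : ℝ) + 1)) ^ 2 := by
      simp [Complex.normSq_apply, Complex.mul_re, Complex.mul_im]
      ring
    rw [h1, h2, hr2]
    field_simp
    ring
  have hnw : Complex.normSq w = 1 := by
    have h1 : Complex.normSq w ^ 2 = 1 := by
      rw [← map_pow, hw, hnz]
    nlinarith [Complex.normSq_nonneg w]
  have hw0 : w ≠ 0 := by
    intro h
    rw [h] at hnw; simp at hnw
  have hconj : w⁻¹ = (starRingEnd ℂ) w := by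
    apply inv_eq_of_mul_eq_one_right
    rw [Complex.mul_conj, hnw]; simp
  -- s = w + w⁻¹ is real
  set s : ℂ := w + w⁻¹ with hs
  have hsim : s.im = 0 := by
    rw [hs, hconj]
    simp
  have hwim : w.im ≠ 0 := by
    intro h
    have : (starRingEnd ℂ) w = w := Complex.conj_eq_iff_im.mpr h
    rw [this] at hconj
    have hz1 : z = 1 := by
      calc z = w * w := by rw [← hw, sq]
        _ = w * w⁻¹ := by rw [hconj]
        _ = 1 := mul_inv_cancel₀ hw0
    rw [hz1] at hzim'; simp at hzim'
  set F := IntermediateField.adjoin ℚ {s} with hF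
  set K := IntermediateField.adjoin ℚ {w} with hK
  have hsK : s ∈ K := by
    exact add_mem (mem_adjoin_simple_self ℚ w) (inv_mem (mem_adjoin_simple_self ℚ w))
  have hle : F ≤ K := by
    rw [hF, adjoin_le_iff]
    simpa using hsK
  -- F is real
  have hFreal : F ≤ realIF := by
    rw [hF, adjoin_le_iff]
    simp only [Set.singleton_subset_iff, SetLike.mem_coe]
    exact mem_realIF_iff.mpr hsim
  have hwF : w ∉ F := fun h => hwim (mem_realIF_iff.mp (hFreal h))
  -- w is integral over F, with minimal polynomial of degree 2
  have hsF : s ∈ F := mem_adjoin_simple_self ℚ s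
  set p : Polynomial F := X ^ 2 - C (⟨s, hsF⟩ : F) * X + 1 with hp
  have hpmonic : p.Monic := by
    rw [hp]; monicity!
  have haev : Polynomial.aeval w p = 0 := by
    rw [hp]
    simp only [map_add, map_sub, map_mul, map_one, map_pow, aeval_X, aeval_C]
    have hmap : (algebraMap F ℂ) (⟨s, hsF⟩ : F) = s := rfl
    rw [hmap, hs]
    field_simp
    ring
  have hint : IsIntegral F w := ⟨p, hpmonic, haev⟩
  have hpdeg : p.natDegree = 2 := by
    rw [hp]; compute_degree!
  have hmindeg : (minpoly F w).natDegree = 2 := by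
    have hle2 : (minpoly F w).natDegree ≤ 2 := by
      rw [← hpdeg]
      exact natDegree_le_natDegree (minpoly.min F w hpmonic haev)
    have hge2 : 2 ≤ (minpoly F w).natDegree := by
      rw [minpoly.two_le_natDegree_iff hint]
      rintro ⟨f, hf⟩
      exact hwF (hf ▸ f.2)
    omega
  -- the extension
  have hEK : IntermediateField.extendScalars hle = IntermediateField.adjoin F {w} := by
    apply le_antisymm
    · intro x hx
      have hx' : x ∈ K := hx
      have hsub : K ≤ IntermediateField.restrictScalars ℚ (IntermediateField.adjoin F {w}) := by
        rw [hK, adjoin_le_iff]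
        simp only [Set.singleton_subset_iff, SetLike.mem_coe]
        exact mem_adjoin_simple_self F w
      exact hsub hx'
    · rw [adjoin_le_iff]
      simp only [Set.singleton_subset_iff, SetLike.mem_coe, mem_extendScalars]
      exact mem_adjoin_simple_self ℚ w
  have hfin : Module.finrank F (IntermediateField.extendScalars hle) = 2 := by
    rw [hEK, adjoin.finrank hint, hmindeg]
  refine ⟨⟨hle, hfin⟩, ?_⟩
  intro h
  exact hwF (h ▸ mem_adjoin_simple_self ℚ w)
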